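/- Let k > 2 and let H be a family of graphs such that every H ∈ H contains a cycle of length at most k. Then for every δ > 0 there exists an H-free graph G on n vertices (for some n) containing no homogeneous pair (P, Q) with |P|, |Q| ≥ δn. Consequently, the class of H-free graphs does not have the strong Erdős–Hajnal property. -/

import Mathlib

open Finset

namespace EHAux

variable {E : Type*} [Fintype E] [DecidableEq E]

def wt (p : ℝ) (ω : E → Bool) : ℝ := ∏ e : E, (if ω e then p else 1 - p)

lemma wt_nonneg {p : ℝ} (h0 : 0 ≤ p) (h1 : p ≤ 1) (ω : E → Bool) : 0 ≤ wt p ω :=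
  Finset.prod_nonneg fun e _ => by split <;> linarith

lemma sum_wt_ind (p : ℝ) (S : Finset E) (b : Bool) :
    ∑ ω : E → Bool, wt p ω * (if ∀ e ∈ S, ω e = b then 1 else 0)
      = (if b then p else 1 - p) ^ S.card := by
  have key : ∀ ω : E → Bool,
      wt p ω * (if ∀ e ∈ S, ω e = b then 1 else 0)
        = ∏ e : E, ((if ω e then p else 1 - p) * (if e ∈ S then (if ω e = b then (1:ℝ) else 0) else 1)) := by
    intro ω
    rw [Finset.prod_mul_distrib, Finset.prod_ite_mem, Finset.univ_inter, Finset.prod_boole]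
    unfold wt
    congr!
  simp only [key]
  rw [← Fintype.piFinset_univ, Finset.sum_prod_piFinset (univ : Finset Bool)
    (fun e x => (if x then p else 1 - p) * (if e ∈ S then (if x = b then (1:ℝ) else 0) else 1))]
  have : ∀ e : E, (∑ x ∈ (univ : Finset Bool), ((if x then p else 1 - p) * (if e ∈ S then (if x = b then (1:ℝ) else 0) else 1)))
      = if e ∈ S then (if b then p else 1 - p) else 1 := by
    intro e
    rw [show (∑ x ∈ (univ : Finset Bool), ((if x then p else 1 - p) * (if e ∈ S then (if x = b then (1:ℝ) else 0) else 1))) = ∑ x : Bool, ((if x then p else 1 - p) * (if e ∈ S then (if x = b then (1:ℝ) else 0) else 1)) from rfl, Fintype.sum_bool]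
    by_cases hS : e ∈ S <;> cases b <;> simp [hS]
  simp only [this]
  rw [Finset.prod_ite_mem, Finset.univ_inter, Finset.prod_const]

lemma sum_wt_one (p : ℝ) : (∑ ω : E → Bool, wt p ω) = 1 := by
  have := sum_wt_ind (E := E) p ∅ true
  simpa using this

/-- probability that all coordinates in `S` equal `b`, bounded by event implication -/
lemma sum_wt_event_le {p : ℝ} (h0 : 0 ≤ p) (h1 : p ≤ 1)
    {A : (E → Bool) → Prop} [DecidablePred A] (S : Finset E) (b : Bool)
    (h : ∀ ω, A ω → ∀ e ∈ S, ω e = b) :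
    ∑ ω : E → Bool, wt p ω * (if A ω then 1 else 0) ≤ (if b then p else 1 - p) ^ S.card := by
  rw [← sum_wt_ind p S b]
  refine Finset.sum_le_sum fun ω _ => ?_
  refine mul_le_mul_of_nonneg_left ?_ (wt_nonneg h0 h1 ω)
  by_cases hA : A ω
  · simp only [hA, if_true]
    rw [if_pos (h ω hA)]
  · simp [hA]; positivity

/-- split over a disjunction of two monochromatic events -/
lemma sum_wt_event_le_two {p : ℝ} (h0 : 0 ≤ p) (h1 : p ≤ 1)
    {A : (E → Bool) → Prop} [DecidablePred A] (S : Finset E)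
    (h : ∀ ω, A ω → (∀ e ∈ S, ω e = true) ∨ (∀ e ∈ S, ω e = false)) :
    ∑ ω : E → Bool, wt p ω * (if A ω then 1 else 0) ≤ p ^ S.card + (1 - p) ^ S.card := by
  have h1' := sum_wt_ind (E := E) p S true
  have h2' := sum_wt_ind (E := E) p S false
  norm_num at h1' h2'
  rw [← h1', ← h2', ← Finset.sum_add_distrib]
  refine Finset.sum_le_sum fun ω _ => ?_
  have hw := wt_nonneg h0 h1 ω
  have hpos : ∀ (c : Prop) [Decidable c], (0:ℝ) ≤ if c then wt p ω else 0 := by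
    intro c _; split; exacts [hw, le_rfl]
  by_cases hA : A ω
  · rcases h ω hA with h' | h'
    · rw [if_pos hA, mul_one, if_pos h']
      have := hpos (∀ e ∈ S, ω e = false); linarith
    · rw [if_pos hA, mul_one, if_pos h']
      have := hpos (∀ e ∈ S, ω e = true); linarith
  · rw [if_neg hA, mul_zero]
    have := hpos (∀ e ∈ S, ω e = false)
    have := hpos (∀ e ∈ S, ω e = true)
    linarith

section Graph

variable {n : ℕ}

/-- canonical coordinate for the pair {a,b} -/
def ed (a b : Fin n) : Fin n × Fin n := (min a b, max a b)

lemma ed_comm (a b : Fin n) : ed a b = ed b a := by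
  simp [ed, min_comm, max_comm]

lemma ed_eq_of (a b c d : Fin n) (h : ed a b = ed c d) :
    (a = c ∧ b = d) ∨ (a = d ∧ b = c) := by
  rw [ed, ed, Prod.ext_iff] at h
  obtain ⟨h1, h2⟩ := h
  dsimp only at h1 h2
  rcases le_total a b with hab | hab <;> rcases le_total c d with hcd | hcd
  · rw [min_eq_left hab, min_eq_left hcd] at h1
    rw [max_eq_right hab, max_eq_right hcd] at h2; tauto
  · rw [min_eq_left hab, min_eq_right hcd] at h1
    rw [max_eq_right hab, max_eq_left hcd] at h2; tauto
  · rw [min_eq_right hab, min_eq_left hcd] at h1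
    rw [max_eq_left hab, max_eq_right hcd] at h2; tauto
  · rw [min_eq_right hab, min_eq_right hcd] at h1
    rw [max_eq_left hab, max_eq_left hcd] at h2; tauto

/-- the random graph determined by a configuration -/
def gr (ω : Fin n × Fin n → Bool) : SimpleGraph (Fin n) where
  Adj a b := a ≠ b ∧ ω (ed a b) = true
  symm := by
    constructor
    intro a b ⟨h1, h2⟩
    exact ⟨h1.symm, by rwa [ed_comm]⟩
  loopless := ⟨fun a h => h.1 rfl⟩

instance (ω : Fin n × Fin n → Bool) : DecidableRel (gr ω).Adj :=
  fun a b => inferInstanceAs (Decidable (a ≠ b ∧ ω (ed a b) = true))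

lemma gr_adj {ω : Fin n × Fin n → Bool} {a b : Fin n} :
    (gr ω).Adj a b ↔ a ≠ b ∧ ω (ed a b) = true := Iff.rfl

end Graph
section Events

variable {n : ℕ}

def homEv (m : ℕ) (ω : Fin n × Fin n → Bool) (PQ : Finset (Fin n) × Finset (Fin n)) : Prop :=
  Disjoint PQ.1 PQ.2 ∧ ((∀ a ∈ PQ.1, ∀ b ∈ PQ.2, (gr ω).Adj a b) ∨ (∀ a ∈ PQ.1, ∀ b ∈ PQ.2, ¬ (gr ω).Adj a b))

instance (m : ℕ) (ω : Fin n × Fin n → Bool) : DecidablePred (homEv m ω (n := n)) := by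
  intro PQ; unfold homEv; infer_instance

/-- number of homogeneous pairs of size m -/
def XX (m : ℕ) (ω : Fin n × Fin n → Bool) : ℕ :=
  (((univ.powersetCard m) ×ˢ (univ.powersetCard m)).filter (homEv m ω)).card

lemma per_pair {p : ℝ} (h0 : 0 ≤ p) (h1 : p ≤ 1) (m : ℕ) (P Q : Finset (Fin n))
    (hP : P.card = m) (hQ : Q.card = m) :
    ∑ ω : Fin n × Fin n → Bool, wt p ω * (if homEv m ω (P, Q) then 1 else 0)
      ≤ p ^ (m * m) + (1 - p) ^ (m * m) := by
  by_cases hd : Disjoint P Q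
  · set S : Finset (Fin n × Fin n) := (P ×ˢ Q).image (fun x => ed x.1 x.2) with hS
    have hcard : S.card = m * m := by
      rw [hS, Finset.card_image_of_injOn, Finset.card_product, hP, hQ]
      intro x hx y hy hxy
      rw [Finset.mem_coe, Finset.mem_product] at hx hy
      rcases ed_eq_of _ _ _ _ hxy with ⟨e1, e2⟩ | ⟨e1, e2⟩
      · exact Prod.ext e1 e2
      · exact absurd (e1 ▸ hy.2) (Finset.disjoint_left.mp hd hx.1)
    have himpl : ∀ ω : Fin n × Fin n → Bool, homEv m ω (P, Q) →
        (∀ e ∈ S, ω e = true) ∨ (∀ e ∈ S, ω e = false) := by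
      intro ω ⟨_, hhom⟩
      rcases hhom with hadj | hnon
      · left
        intro e he
        obtain ⟨x, hx, rfl⟩ := Finset.mem_image.mp he
        rw [Finset.mem_product] at hx
        exact (hadj x.1 hx.1 x.2 hx.2).2
      · right
        intro e he
        obtain ⟨x, hx, rfl⟩ := Finset.mem_image.mp he
        rw [Finset.mem_product] at hx
        have hne : x.1 ≠ x.2 := fun h =>
          Finset.disjoint_left.mp hd hx.1 (h ▸ hx.2)
        have := hnon x.1 hx.1 x.2 hx.2
        rw [gr_adj] at this
        push_neg at this
        exact Bool.not_eq_true _ ▸ (by simpa using this hne)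
    have := sum_wt_event_le_two h0 h1 S himpl
    rwa [hcard] at this
  · have : ∀ ω : Fin n × Fin n → Bool,
        wt p ω * (if homEv m ω (P, Q) then 1 else 0) = 0 := by
      intro ω
      rw [if_neg (fun h => hd h.1), mul_zero]
    rw [Finset.sum_congr rfl (fun ω _ => this ω), Finset.sum_const, smul_zero]
    have := pow_nonneg h0 (m * m)
    have := pow_nonneg (by linarith : (0:ℝ) ≤ 1 - p) (m * m)
    linarith

lemma EX_bound {p : ℝ} (h0 : 0 ≤ p) (h1 : p ≤ 1) (m : ℕ) :
    ∑ ω : Fin n × Fin n → Bool, wt p ω * (XX m ω : ℝ)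
      ≤ (2 ^ n * 2 ^ n : ℝ) * (p ^ (m * m) + (1 - p) ^ (m * m)) := by
  have hx : ∀ ω : Fin n × Fin n → Bool, (XX m ω : ℝ)
      = ∑ PQ ∈ (univ.powersetCard m) ×ˢ (univ.powersetCard m),
          (if homEv m ω PQ then (1:ℝ) else 0) := by
    intro ω
    rw [XX, Finset.card_filter]
    push_cast
    rfl
  calc ∑ ω : Fin n × Fin n → Bool, wt p ω * (XX m ω : ℝ)
      = ∑ PQ ∈ (univ.powersetCard m) ×ˢ (univ.powersetCard m),
          ∑ ω : Fin n × Fin n → Bool, wt p ω * (if homEv m ω PQ then 1 else 0) := by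
        simp only [hx, Finset.mul_sum]
        rw [Finset.sum_comm]
    _ ≤ ∑ PQ ∈ (univ.powersetCard m) ×ˢ (univ.powersetCard m),
          (p ^ (m * m) + (1 - p) ^ (m * m)) := by
        refine Finset.sum_le_sum fun PQ hPQ => ?_
        rw [Finset.mem_product] at hPQ
        have hP := (Finset.mem_powersetCard_univ.mp hPQ.1)
        have hQ := (Finset.mem_powersetCard_univ.mp hPQ.2)
        have := per_pair h0 h1 m PQ.1 PQ.2 hP hQ
        simpa using this
    _ ≤ (2 ^ n * 2 ^ n : ℝ) * (p ^ (m * m) + (1 - p) ^ (m * m)) := by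
        rw [Finset.sum_const, nsmul_eq_mul]
        refine mul_le_mul_of_nonneg_right ?_ ?_
        · rw [Finset.card_product]
          have hle : ((univ : Finset (Fin n)).powersetCard m).card ≤ 2 ^ n := by
            calc ((univ : Finset (Fin n)).powersetCard m).card
                ≤ ((univ : Finset (Fin n)).powerset).card :=
                  Finset.card_le_card fun x hx =>
                    Finset.mem_powerset.mpr (Finset.mem_powersetCard.mp hx).1
              _ = 2 ^ n := by rw [Finset.card_powerset, Finset.card_univ, Fintype.card_fin]
          have h2 : (((univ : Finset (Fin n)).powersetCard m).card *
                  ((univ : Finset (Fin n)).powersetCard m).card : ℕ) ≤ 2^n * 2^n :=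
            Nat.mul_le_mul hle hle
          calc ((((univ : Finset (Fin n)).powersetCard m).card *
                  ((univ : Finset (Fin n)).powersetCard m).card : ℕ) : ℝ)
              ≤ ((2^n * 2^n : ℕ) : ℝ) := by exact_mod_cast h2
            _ = (2 ^ n * 2 ^ n : ℝ) := by push_cast; ring
        · have := pow_nonneg h0 (m * m)
          have := pow_nonneg (by linarith : (0:ℝ) ≤ 1 - p) (m * m)
          linarith

end Events
section Cycles

variable {n : ℕ}

/-- cyclic successor -/
def nxt {ℓ : ℕ} (i : Fin ℓ) : Fin ℓ := ⟨(i.val + 1) % ℓ, Nat.mod_lt _ i.pos⟩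

lemma nxt_val {ℓ : ℕ} (hl : 3 ≤ ℓ) (i : Fin ℓ) :
    (nxt i).val = if i.val + 1 = ℓ then 0 else i.val + 1 := by
  show (i.val + 1) % ℓ = _
  split
  · next h => rw [h, Nat.mod_self]
  · next h => exact Nat.mod_eq_of_lt (by have := i.isLt; omega)

def cycEv (ω : Fin n × Fin n → Bool) {ℓ : ℕ} (c : Fin ℓ → Fin n) : Prop :=
  Function.Injective c ∧ ∀ i : Fin ℓ, (gr ω).Adj (c i) (c (nxt i))

instance (ω : Fin n × Fin n → Bool) (ℓ : ℕ) : DecidablePred (cycEv ω (ℓ := ℓ)) := by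
  intro c; unfold cycEv; infer_instance

/-- number of short-cycle witnesses -/
def YY (k : ℕ) (ω : Fin n × Fin n → Bool) : ℕ :=
  ∑ ℓ ∈ Finset.Icc 3 k, ((univ : Finset (Fin ℓ → Fin n)).filter (cycEv ω)).card

lemma cyc_edges_card {ℓ : ℕ} (hl : 3 ≤ ℓ) (c : Fin ℓ → Fin n) (hc : Function.Injective c) :
    ((univ : Finset (Fin ℓ)).image (fun i => ed (c i) (c (nxt i)))).card = ℓ := by
  rw [Finset.card_image_of_injective _ ?inj, Finset.card_univ, Fintype.card_fin]
  case inj =>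
    intro i j hij
    rcases ed_eq_of _ _ _ _ hij with ⟨e1, _⟩ | ⟨e1, e2⟩
    · exact hc e1
    · exfalso
      have hi : i = nxt j := hc e1
      have hj : j = nxt i := hc e2.symm
      have v1 := nxt_val hl j
      have v2 := nxt_val hl i
      have hiv : i.val = (nxt j).val := by rw [hi]
      have hjv : j.val = (nxt i).val := by rw [hj]
      rw [v1] at hiv; rw [v2] at hjv
      have := i.isLt; have := j.isLt
      split at hiv <;> split at hjv <;> omega

lemma EY_bound {p : ℝ} (h0 : 0 ≤ p) (h1 : p ≤ 1) (k : ℕ) :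
    ∑ ω : Fin n × Fin n → Bool, wt p ω * (YY k ω : ℝ)
      ≤ ∑ ℓ ∈ Finset.Icc 3 k, ((n : ℝ) * p) ^ ℓ := by
  have step : ∀ ℓ ∈ Finset.Icc 3 k,
      (∑ ω : Fin n × Fin n → Bool,
        wt p ω * (((univ : Finset (Fin ℓ → Fin n)).filter (cycEv ω)).card : ℝ))
      ≤ ((n : ℝ) * p) ^ ℓ := by
    intro ℓ hℓ
    rw [Finset.mem_Icc] at hℓ
    have hx : ∀ ω : Fin n × Fin n → Bool,
        ((((univ : Finset (Fin ℓ → Fin n)).filter (cycEv ω)).card : ℝ))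
        = ∑ c : Fin ℓ → Fin n, (if cycEv ω c then (1:ℝ) else 0) := by
      intro ω
      rw [Finset.card_filter]
      push_cast
      rfl
    calc (∑ ω : Fin n × Fin n → Bool,
            wt p ω * (((univ : Finset (Fin ℓ → Fin n)).filter (cycEv ω)).card : ℝ))
        = ∑ c : Fin ℓ → Fin n, ∑ ω : Fin n × Fin n → Bool,
            wt p ω * (if cycEv ω c then 1 else 0) := by
          simp only [hx, Finset.mul_sum]
          rw [Finset.sum_comm]
      _ ≤ ∑ _c : Fin ℓ → Fin n, p ^ ℓ := by
          refine Finset.sum_le_sum fun c _ => ?_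
          by_cases hc : Function.Injective c
          · have hcard := cyc_edges_card hℓ.1 c hc
            have := sum_wt_event_le h0 h1
              ((univ : Finset (Fin ℓ)).image (fun i => ed (c i) (c (nxt i)))) true
              (A := fun ω => cycEv ω c) ?_
            · rw [hcard] at this; simpa using this
            · intro ω hω e he
              obtain ⟨i, _, rfl⟩ := Finset.mem_image.mp he
              exact (hω.2 i).2
          · have : ∀ ω : Fin n × Fin n → Bool,
                wt p ω * (if cycEv ω c then (1:ℝ) else 0) = 0 := by
              intro ω; rw [if_neg (fun h => hc h.1), mul_zero]
            rw [Finset.sum_congr rfl (fun ω _ => this ω), Finset.sum_const, smul_zero]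
            positivity
      _ ≤ ((n : ℝ) * p) ^ ℓ := by
          rw [Finset.sum_const, nsmul_eq_mul, Finset.card_univ, Fintype.card_fun,
            Fintype.card_fin, Fintype.card_fin, mul_pow]
          push_cast
          exact le_of_eq (by ring)
  calc ∑ ω : Fin n × Fin n → Bool, wt p ω * (YY k ω : ℝ)
      = ∑ ℓ ∈ Finset.Icc 3 k, ∑ ω : Fin n × Fin n → Bool,
          wt p ω * (((univ : Finset (Fin ℓ → Fin n)).filter (cycEv ω)).card : ℝ) := by
        unfold YY
        simp only [Nat.cast_sum, Finset.mul_sum]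
        rw [Finset.sum_comm]
    _ ≤ ∑ ℓ ∈ Finset.Icc 3 k, ((n : ℝ) * p) ^ ℓ := Finset.sum_le_sum step

end Cycles
section Extract

variable {n : ℕ}

lemma exists_good {p : ℝ} (h0 : 0 ≤ p) (h1 : p ≤ 1) (m k t : ℕ) (ht : 0 < t)
    (hEX : ∑ ω : Fin n × Fin n → Bool, wt p ω * (XX m ω : ℝ) ≤ 1/4)
    (hEY : ∑ ω : Fin n × Fin n → Bool, wt p ω * (YY k ω : ℝ) ≤ (t : ℝ)/2) :
    ∃ ω : Fin n × Fin n → Bool, XX m ω = 0 ∧ YY k ω < t := by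
  by_contra hcon
  push_neg at hcon
  set A := (univ : Finset (Fin n × Fin n → Bool)).filter (fun ω => 1 ≤ XX m ω) with hA
  set B := (univ : Finset (Fin n × Fin n → Bool)).filter (fun ω => t ≤ YY k ω) with hB
  have hwA : ∑ ω ∈ A, wt p ω ≤ 1/4 := by
    calc ∑ ω ∈ A, wt p ω ≤ ∑ ω ∈ A, wt p ω * (XX m ω : ℝ) := by
          refine Finset.sum_le_sum fun ω hω => ?_
          rw [hA, Finset.mem_filter] at hω
          have : (1:ℝ) ≤ (XX m ω : ℝ) := by exact_mod_cast hω.2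
          nlinarith [wt_nonneg h0 h1 ω]
      _ ≤ ∑ ω : Fin n × Fin n → Bool, wt p ω * (XX m ω : ℝ) := by
          refine Finset.sum_le_sum_of_subset_of_nonneg (Finset.subset_univ _) fun ω _ _ => ?_
          exact mul_nonneg (wt_nonneg h0 h1 ω) (Nat.cast_nonneg _)
      _ ≤ 1/4 := hEX
  have hwB : ∑ ω ∈ B, wt p ω ≤ 1/2 := by
    have key : (t:ℝ) * ∑ ω ∈ B, wt p ω ≤ (t:ℝ)/2 := by
      calc (t:ℝ) * ∑ ω ∈ B, wt p ω = ∑ ω ∈ B, wt p ω * (t:ℝ) := by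
            rw [Finset.mul_sum]; exact Finset.sum_congr rfl fun ω _ => mul_comm _ _
        _ ≤ ∑ ω ∈ B, wt p ω * (YY k ω : ℝ) := by
            refine Finset.sum_le_sum fun ω hω => ?_
            rw [hB, Finset.mem_filter] at hω
            have : (t:ℝ) ≤ (YY k ω : ℝ) := by exact_mod_cast hω.2
            nlinarith [wt_nonneg h0 h1 ω]
        _ ≤ ∑ ω : Fin n × Fin n → Bool, wt p ω * (YY k ω : ℝ) := by
            refine Finset.sum_le_sum_of_subset_of_nonneg (Finset.subset_univ _) fun ω _ _ => ?_
            exact mul_nonneg (wt_nonneg h0 h1 ω) (Nat.cast_nonneg _)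
        _ ≤ (t:ℝ)/2 := hEY
    have htR : (0:ℝ) < t := by exact_mod_cast ht
    nlinarith
  have hsub : (univ : Finset (Fin n × Fin n → Bool)) \ A ⊆ B := by
    intro ω hω
    rw [Finset.mem_sdiff, hA, Finset.mem_filter] at hω
    rw [hB, Finset.mem_filter]
    refine ⟨Finset.mem_univ _, ?_⟩
    have hX0 : XX m ω = 0 := by
      have := hω.2
      simp only [Finset.mem_univ, true_and] at this
      omega
    exact hcon ω hX0
  have hsplit : (1:ℝ) = ∑ ω ∈ A, wt p ω + ∑ ω ∈ univ \ A, wt p ω := by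
    rw [← sum_wt_one (E := Fin n × Fin n) p]
    rw [← Finset.sum_sdiff (Finset.subset_univ A)]
    ring
  have hrest : ∑ ω ∈ univ \ A, wt p ω ≤ ∑ ω ∈ B, wt p ω :=
    Finset.sum_le_sum_of_subset_of_nonneg hsub fun ω _ _ => wt_nonneg h0 h1 ω
  linarith

end Extract
section Main

set_option maxHeartbeats 2000000 in
/-- The main probabilistic construction. -/
theorem main_construction (k : ℕ) (hk : 2 < k) (δ : ℝ) (hδ : 0 < δ) :
    ∃ (N : ℕ) (G : SimpleGraph (Fin N)), 2 ≤ N ∧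
      (∀ (ℓ : ℕ), 3 ≤ ℓ → ℓ ≤ k → ∀ c : Fin ℓ → Fin N,
        ¬ (Function.Injective c ∧ ∀ i, G.Adj (c i) (c (nxt i)))) ∧
      ¬ ∃ P Q : Finset (Fin N), P.Nonempty ∧ Q.Nonempty ∧ Disjoint P Q ∧
        ((∀ a ∈ P, ∀ b ∈ Q, G.Adj a b) ∨ (∀ a ∈ P, ∀ b ∈ Q, ¬ G.Adj a b)) ∧
        δ * N ≤ P.card ∧ δ * N ≤ Q.card := by
  set ε : ℝ := δ / 2 with hεdef
  have hε : 0 < ε := by positivity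
  set C0 : ℝ := (k : ℝ) * (2 / ε ^ 2 + 1) ^ k with hC0def
  have hbase1 : (1:ℝ) ≤ 2 / ε ^ 2 + 1 := by
    have : (0:ℝ) < 2 / ε ^ 2 := by positivity
    linarith
  have hC0 : 0 ≤ C0 := mul_nonneg (Nat.cast_nonneg k) (pow_nonneg (by positivity) _)
  set t : ℕ := ⌈2 * C0⌉₊ + 1 with htdef
  have ht : 0 < t := Nat.succ_pos _
  have htC0 : 2 * C0 ≤ (t : ℝ) := by
    have := Nat.le_ceil (2 * C0)
    push_cast [htdef]
    linarith
  set n : ℕ := 2 * t + 6 + ⌈(4:ℝ) / ε ^ 2⌉₊ with hndef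
  have hn6 : 6 ≤ n := by omega
  have hn0 : 0 < n := by omega
  have hn2t : 2 * t + 6 ≤ n := by omega
  have hnR : (0:ℝ) < n := by exact_mod_cast hn0
  have hε2n : 4 ≤ ε ^ 2 * n := by
    have h1 : ((4:ℝ) / ε ^ 2) ≤ (⌈(4:ℝ) / ε ^ 2⌉₊ : ℝ) := Nat.le_ceil _
    have h2 : (⌈(4:ℝ) / ε ^ 2⌉₊ : ℕ) ≤ n := by omega
    have h2' : ((⌈(4:ℝ) / ε ^ 2⌉₊ : ℕ) : ℝ) ≤ (n : ℝ) := by exact_mod_cast h2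
    have h3 : (4:ℝ) / ε ^ 2 ≤ n := le_trans h1 h2'
    calc (4:ℝ) = ε ^ 2 * (4 / ε ^ 2) := by field_simp
      _ ≤ ε ^ 2 * n := by
          refine mul_le_mul_of_nonneg_left h3 (by positivity)
  set p : ℝ := 2 / (ε ^ 2 * n) with hpdef
  have hp0' : 0 < p := by positivity
  have hp0 : 0 ≤ p := le_of_lt hp0'
  have hphalf : p ≤ 1 / 2 := by
    rw [hpdef, div_le_div_iff₀ (by positivity) (by norm_num)]
    linarith
  have hp1 : p ≤ 1 := by linarith
  set m : ℕ := ⌈ε * n⌉₊ with hmdef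
  have hm : ε * n ≤ (m : ℝ) := Nat.le_ceil _
  have hεne : ε ≠ 0 := ne_of_gt hε
  have hnne : (n:ℝ) ≠ 0 := ne_of_gt hnR
  clear_value ε C0 t n p m
  -- bound E[X]
  have hmm : (2 * n + 3 : ℕ) ≤ m * m := by
    have h1 : (4:ℝ) * n ≤ (m : ℝ) * m := by
      calc (4:ℝ) * n ≤ (ε ^ 2 * n) * n := by nlinarith
        _ = (ε * n) * (ε * n) := by ring
        _ ≤ (m : ℝ) * m := by
            have hεn : (0:ℝ) ≤ ε * n := by positivity
            nlinarith [hm, hεn]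
    have h2 : ((2 * n + 3 : ℕ) : ℝ) ≤ ((m * m : ℕ) : ℝ) := by
      push_cast
      have : (2:ℝ) ≤ n := by exact_mod_cast le_trans (by norm_num) hn6
      nlinarith
    exact_mod_cast h2
  have hEX : ∑ ω : Fin n × Fin n → Bool, wt p ω * (XX m ω : ℝ) ≤ 1/4 := by
    refine le_trans (EX_bound hp0 hp1 m) ?_
    have hA : (2:ℝ) ^ n * 2 ^ n * p ^ (m * m) ≤ 1 / 8 := by
      have e1 : p ^ (m * m) ≤ (1/2 : ℝ) ^ (m * m) := pow_le_pow_left₀ hp0 hphalf _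
      have e2 : ((1:ℝ)/2) ^ (m * m) ≤ (1/2 : ℝ) ^ (2 * n + 3) :=
        pow_le_pow_of_le_one (by norm_num) (by norm_num) hmm
      have e3 : (2:ℝ) ^ n * 2 ^ n * (1/2) ^ (2 * n + 3) = 1 / 8 := by
        have h2' : ((2:ℝ) * (1/2)) ^ n = 2 ^ n * (1/2) ^ n := mul_pow 2 (1/2) n
        have h1' : ((2:ℝ) * (1/2)) ^ n = 1 := by norm_num
        have h3' : ((1:ℝ)/2) ^ (2 * n + 3) = (1/2) ^ n * ((1/2) ^ n * (1/8)) := by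
          rw [show 2 * n + 3 = n + (n + 3) from by ring, pow_add, pow_add,
            show ((1:ℝ)/2) ^ 3 = 1/8 from by norm_num]
        calc (2:ℝ) ^ n * 2 ^ n * (1/2) ^ (2 * n + 3)
            = (2 ^ n * (1/2) ^ n) * (2 ^ n * (1/2) ^ n) * (1/8) := by rw [h3']; ring
          _ = 1 * 1 * (1/8) := by rw [← h2', h1']
          _ = 1/8 := by norm_num
      nlinarith [pow_nonneg hp0 (m*m), pow_nonneg (show (0:ℝ) ≤ 1/2 by norm_num) (m*m),
        pow_pos (show (0:ℝ) < 2 by norm_num) n]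
    have hB : (2:ℝ) ^ n * 2 ^ n * (1 - p) ^ (m * m) ≤ 1 / 8 := by
      have e0 : 0 ≤ 1 - p := by linarith
      have e1 : (1 - p : ℝ) ≤ Real.exp (-p) := by
        have := Real.add_one_le_exp (-p); linarith
      have e2 : (1 - p) ^ (m * m) ≤ Real.exp (-p) ^ (m * m) := pow_le_pow_left₀ e0 e1 _
      have e3 : Real.exp (-p) ^ (m * m) = Real.exp (-(p * (m * m))) := by
        rw [← Real.exp_nat_mul]
        congr 1
        push_cast
        ring
      have e4 : 2 * (n:ℝ) ≤ p * (m * m) := by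
        have h1 : (ε * n) * (ε * n) ≤ (m:ℝ) * m := by
          have hεn : (0:ℝ) ≤ ε * n := by positivity
          nlinarith [hm, hεn]
        have h2 : p * ((ε * n) * (ε * n)) = 2 * n := by
          rw [hpdef]
          field_simp
        nlinarith
      have e5 : Real.exp (-(p * (m * m))) ≤ Real.exp (-(2 * n)) :=
        Real.exp_le_exp.mpr (by linarith)
      have e6 : (2:ℝ) ^ n * 2 ^ n * Real.exp (-(2 * n)) ≤ (3/5 : ℝ) ^ n := by
        have h7 : Real.exp (-(2 * (n:ℝ))) = (Real.exp (-2)) ^ n := by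
          rw [← Real.exp_nat_mul]
          congr 1
          ring
        rw [h7, ← mul_pow, ← mul_pow]
        refine pow_le_pow_left₀ ?_ ?_ n
        · positivity
        · have hexp2 : (20/3 : ℝ) < Real.exp 2 := by
            have h9 : (2.7182818283 : ℝ) < Real.exp 1 := Real.exp_one_gt_d9
            have : Real.exp 2 = Real.exp 1 * Real.exp 1 := by
              rw [← Real.exp_add]; norm_num
            nlinarith
          have hinv : Real.exp (-2) = (Real.exp 2)⁻¹ := by
            rw [Real.exp_neg]
          rw [hinv]
          rw [show (2:ℝ) * 2 * (Real.exp 2)⁻¹ = 4 / Real.exp 2 by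
            rw [div_eq_mul_inv]; norm_num]
          rw [div_le_iff₀ (by positivity)]
          nlinarith
      have e7 : (3/5 : ℝ) ^ n ≤ (3/5 : ℝ) ^ 6 :=
        pow_le_pow_of_le_one (by norm_num) (by norm_num) hn6
      have e8 : (3/5 : ℝ) ^ 6 ≤ 1/8 := by norm_num
      have hpow2 : (0:ℝ) < 2 ^ n * 2 ^ n := by positivity
      nlinarith [Real.exp_pos (-(2*(n:ℝ))), pow_nonneg e0 (m*m)]
    linarith
  -- bound E[Y]
  have hEY : ∑ ω : Fin n × Fin n → Bool, wt p ω * (YY k ω : ℝ) ≤ (t:ℝ)/2 := by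
    refine le_trans (EY_bound hp0 hp1 k) ?_
    have hnp : (n:ℝ) * p = 2 / ε ^ 2 := by
      rw [hpdef]
      field_simp
    have hterm : ∀ ℓ ∈ Finset.Icc 3 k, ((n:ℝ) * p) ^ ℓ ≤ (2 / ε ^ 2 + 1) ^ k := by
      intro ℓ hℓ
      rw [Finset.mem_Icc] at hℓ
      rw [hnp]
      calc (2 / ε ^ 2) ^ ℓ ≤ (2 / ε ^ 2 + 1) ^ ℓ :=
            pow_le_pow_left₀ (by positivity) (by linarith) _
        _ ≤ (2 / ε ^ 2 + 1) ^ k := pow_le_pow_right₀ hbase1 hℓ.2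
    calc ∑ ℓ ∈ Finset.Icc 3 k, ((n : ℝ) * p) ^ ℓ
        ≤ ∑ _ℓ ∈ Finset.Icc 3 k, (2 / ε ^ 2 + 1) ^ k := Finset.sum_le_sum hterm
      _ = ((Finset.Icc 3 k).card : ℝ) * (2 / ε ^ 2 + 1) ^ k := by
          rw [Finset.sum_const, nsmul_eq_mul]
      _ ≤ (k : ℝ) * (2 / ε ^ 2 + 1) ^ k := by
          have : (Finset.Icc 3 k).card ≤ k := by
            rw [Nat.card_Icc]; omega
          have h' : ((Finset.Icc 3 k).card : ℝ) ≤ (k : ℝ) := by exact_mod_cast this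
          nlinarith [pow_nonneg (le_trans zero_le_one hbase1) k]
      _ = C0 := hC0def.symm
      _ ≤ (t:ℝ)/2 := by linarith
  obtain ⟨ω, hX0, hYt⟩ := exists_good hp0 hp1 m k t ht hEX hEY
  -- deletion
  set D : Finset (Fin n) := (Finset.Icc 3 k).biUnion
    (fun ℓ => (((univ : Finset (Fin ℓ → Fin n)).filter (cycEv ω)).image
      (fun c => if h : 0 < ℓ then c ⟨0, h⟩ else ⟨0, hn0⟩))) with hDdef
  have hDcard : D.card < t := by
    calc D.card ≤ ∑ ℓ ∈ Finset.Icc 3 k,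
          ((((univ : Finset (Fin ℓ → Fin n)).filter (cycEv ω)).image
            (fun c => if h : 0 < ℓ then c ⟨0, h⟩ else ⟨0, hn0⟩))).card :=
          Finset.card_biUnion_le
      _ ≤ ∑ ℓ ∈ Finset.Icc 3 k, (((univ : Finset (Fin ℓ → Fin n)).filter (cycEv ω))).card :=
          Finset.sum_le_sum fun ℓ _ => Finset.card_image_le
      _ = YY k ω := rfl
      _ < t := hYt
  set R : Finset (Fin n) := univ \ D with hRdef
  set N : ℕ := R.card with hNdef
  have hNn : N = n - D.card := by
    rw [hNdef, hRdef, Finset.card_sdiff_of_subset (Finset.subset_univ _), Finset.card_univ,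
      Fintype.card_fin]
  have hN2 : 2 ≤ N := by omega
  have hNhalf : (n : ℝ) - t ≤ (N : ℝ) := by
    have h1 : n - t ≤ N := by omega
    have h2 : t ≤ n := by omega
    have : ((n - t : ℕ) : ℝ) ≤ (N : ℝ) := by exact_mod_cast h1
    rwa [Nat.cast_sub h2] at this
  set eiso := R.orderIsoOfFin (rfl : R.card = N) with heiso
  set f : Fin N → Fin n := fun i => (eiso i : Fin n) with hfdef
  have hf : Function.Injective f := by
    intro a b hab
    have := Subtype.ext hab (p := fun x => x ∈ R)
    exact (OrderIso.injective eiso) this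
  have hfR : ∀ i, f i ∈ R := fun i => (eiso i).2
  refine ⟨N, (gr ω).comap f, hN2, ?_, ?_⟩
  · -- no short cycle witnesses
    rintro ℓ h3 hkl c ⟨hinj, hadj⟩
    have hcyc' : cycEv ω (f ∘ c) := by
      refine ⟨hf.comp hinj, fun i => ?_⟩
      exact hadj i
    have hmem : (f ∘ c) ⟨0, by omega⟩ ∈ D := by
      rw [hDdef]
      refine Finset.mem_biUnion.mpr ⟨ℓ, Finset.mem_Icc.mpr ⟨h3, hkl⟩, ?_⟩
      refine Finset.mem_image.mpr ⟨f ∘ c, Finset.mem_filter.mpr ⟨Finset.mem_univ _, hcyc'⟩, ?_⟩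
      rw [dif_pos (by omega : 0 < ℓ)]
    have hmemR : (f ∘ c) ⟨0, by omega⟩ ∈ R := hfR _
    rw [hRdef, Finset.mem_sdiff] at hmemR
    exact hmemR.2 hmem
  · -- no homogeneous pair
    rintro ⟨P, Q, hPne, hQne, hdisj, hhom, hPc, hQc⟩
    have hchain : ∀ (S : Finset (Fin N)), δ * N ≤ S.card → m ≤ S.card := by
      intro S hS
      rw [hmdef]
      rw [Nat.ceil_le]
      calc ε * n = δ * (n / 2) := by rw [hεdef]; ring
        _ ≤ δ * N := by
            have hn2t' : 2 * (t:ℝ) + 6 ≤ (n:ℝ) := by exact_mod_cast hn2t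
            have : (n:ℝ)/2 ≤ (N:ℝ) := by linarith
            nlinarith
        _ ≤ S.card := hS
    obtain ⟨P', hP'sub, hP'card⟩ := Finset.exists_subset_card_eq (hchain P hPc)
    obtain ⟨Q', hQ'sub, hQ'card⟩ := Finset.exists_subset_card_eq (hchain Q hQc)
    have hdisj' : Disjoint P' Q' := Finset.disjoint_of_subset_left hP'sub
      (Finset.disjoint_of_subset_right hQ'sub hdisj)
    set P'' := P'.image f with hP''
    set Q'' := Q'.image f with hQ''
    have hhomEv : homEv m ω (P'', Q'') := by
      constructor
      · rw [hP'', hQ'']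
        exact Finset.disjoint_image hf |>.mpr hdisj'
      · rcases hhom with hall | hnone
        · left
          intro a ha b hb
          obtain ⟨a', ha', rfl⟩ := Finset.mem_image.mp ha
          obtain ⟨b', hb', rfl⟩ := Finset.mem_image.mp hb
          exact hall a' (hP'sub ha') b' (hQ'sub hb')
        · right
          intro a ha b hb
          obtain ⟨a', ha', rfl⟩ := Finset.mem_image.mp ha
          obtain ⟨b', hb', rfl⟩ := Finset.mem_image.mp hb
          exact hnone a' (hP'sub ha') b' (hQ'sub hb')
    have hmemX : (P'', Q'') ∈ (((univ : Finset (Fin n)).powersetCard m) ×ˢ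
        ((univ : Finset (Fin n)).powersetCard m)).filter (homEv m ω) := by
      refine Finset.mem_filter.mpr ⟨Finset.mem_product.mpr ⟨?_, ?_⟩, hhomEv⟩
      · exact Finset.mem_powersetCard_univ.mpr
          (by rw [hP'', Finset.card_image_of_injective _ hf, hP'card])
      · exact Finset.mem_powersetCard_univ.mpr
          (by rw [hQ'', Finset.card_image_of_injective _ hf, hQ'card])
    have : XX m ω ≠ 0 := by
      rw [XX]
      exact Finset.card_ne_zero_of_mem hmemX
    exact this hX0

end Main
section Bridge

open SimpleGraph

lemma getVert_eq_support_get {V : Type*} {G : SimpleGraph V} {u v : V} (w : G.Walk u v) :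
    ∀ (i : ℕ) (h : i < w.support.length), w.support.get ⟨i, h⟩ = w.getVert i := by
  induction w with
  | nil =>
    intro i h
    simp only [Walk.support_nil, List.length_singleton] at h
    interval_cases i
    · rfl
  | cons hadj p ih =>
    intro i h
    cases i with
    | zero => rfl
    | succ j =>
      have h' : j < p.support.length := by
        rw [Walk.support_cons] at h
        simpa using h
      exact ih j h'

lemma walk_witness {V : Type*} {G : SimpleGraph V} {v : V} (w : G.Walk v v) (hw : w.IsCycle) :
    ∃ c : Fin w.length → V, Function.Injective c ∧ ∀ i, G.Adj (c i) (c (nxt i)) := by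
  have h3 : 3 ≤ w.length := hw.three_le_length
  have hsl : w.support.length = w.length + 1 := w.length_support
  have htl : w.support.tail.length = w.length := by
    rw [w.support_eq_cons] at hsl
    simpa using hsl
  refine ⟨fun i => w.getVert (i.val + 1), ?_, ?_⟩
  · intro i j hij
    have hi : i.val < w.support.tail.length := by rw [htl]; exact i.isLt
    have hj : j.val < w.support.tail.length := by rw [htl]; exact j.isLt
    have hgi : w.support.tail.get ⟨i.val, hi⟩ = w.getVert (i.val + 1) := by
      have h1 : i.val + 1 < w.support.length := by omega
      rw [List.get_tail _ _ _ h1]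
      exact getVert_eq_support_get w (i.val + 1) h1
    have hgj : w.support.tail.get ⟨j.val, hj⟩ = w.getVert (j.val + 1) := by
      have h1 : j.val + 1 < w.support.length := by omega
      rw [List.get_tail _ _ _ h1]
      exact getVert_eq_support_get w (j.val + 1) h1
    have hij' : w.getVert (i.val + 1) = w.getVert (j.val + 1) := hij
    have heq : w.support.tail.get ⟨i.val, hi⟩ = w.support.tail.get ⟨j.val, hj⟩ := by
      rw [hgi, hgj]; exact hij'
    have := (hw.support_nodup.get_inj_iff).mp heq
    have hval : i.val = j.val := by simpa using congrArg Fin.val this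
    exact Fin.ext hval
  · intro i
    show G.Adj (w.getVert (i.val + 1)) (w.getVert ((nxt i).val + 1))
    have hlt := i.isLt
    by_cases hi : i.val + 1 = w.length
    · have hv1 : (nxt i).val = 0 := by rw [nxt_val h3 i, if_pos hi]
      have hc1 : w.getVert ((nxt i).val + 1) = w.getVert 1 := by rw [hv1]
      have hc0 : w.getVert (i.val + 1) = w.getVert 0 := by
        rw [hi, w.getVert_length, w.getVert_zero]
      rw [hc1, hc0]
      exact w.adj_getVert_succ (by omega)
    · have hv1 : (nxt i).val = i.val + 1 := by rw [nxt_val h3 i, if_neg hi]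
      have hc1 : w.getVert ((nxt i).val + 1) = w.getVert (i.val + 1 + 1) := by rw [hv1]
      rw [hc1]
      exact w.adj_getVert_succ (by omega)

lemma no_witness_free {k N : ℕ} {G : SimpleGraph (Fin N)}
    (hG : ∀ (ℓ : ℕ), 3 ≤ ℓ → ℓ ≤ k → ∀ c : Fin ℓ → Fin N,
      ¬ (Function.Injective c ∧ ∀ i, G.Adj (c i) (c (nxt i))))
    {V : Type*} (H : SimpleGraph V) (v : V) (w : H.Walk v v)
    (hw : w.IsCycle) (hwk : w.length ≤ k) :
    ¬ ∃ f : V → Fin N, Function.Injective f ∧ ∀ a b : V, H.Adj a b ↔ G.Adj (f a) (f b) := by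
  rintro ⟨f, hfinj, hfadj⟩
  let fh : H →g G := ⟨f, fun h => (hfadj _ _).mp h⟩
  have hfhinj : Function.Injective ⇑fh := hfinj
  have hw' : (w.map fh).IsCycle := (Walk.map_isCycle_iff_of_injective hfhinj).mpr hw
  obtain ⟨c, hcinj, hcadj⟩ := walk_witness (w.map fh) hw'
  exact hG (w.map fh).length hw'.three_le_length (by rw [Walk.length_map]; exact hwk) c
    ⟨hcinj, hcadj⟩

end Bridge
end EHAux

/-- Lemma 6.1 (case (P1)): let `k > 2` and let `ℋ` be a family of (finite) graphs
each of which contains a cycle of length at most `k`. Then for every `δ > 0`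
there is an `ℋ`-free graph `G` on `n` vertices (for some `n`) with no homogeneous
pair `(P, Q)` with `|P|, |Q| ≥ δn`. Consequently, the class of `ℋ`-free graphs
does not have the strong Erdős–Hajnal property. -/
theorem stmt_17 (k : ℕ) (hk : 2 < k)
    (ι : Type) (Vt : ι → Type) [∀ i, Fintype (Vt i)] (H : ∀ i, SimpleGraph (Vt i))
    (hcyc : ∀ i, ∃ (v : Vt i) (w : (H i).Walk v v), w.IsCycle ∧ w.length ≤ k) :
    (∀ δ : ℝ, 0 < δ →
      ∃ (n : ℕ) (G : SimpleGraph (Fin n)),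
        (∀ i, ¬ ∃ f : Vt i → Fin n, Function.Injective f ∧
          ∀ a b : Vt i, (H i).Adj a b ↔ G.Adj (f a) (f b)) ∧
        ¬ ∃ P Q : Finset (Fin n), P.Nonempty ∧ Q.Nonempty ∧ Disjoint P Q ∧
          ((∀ p ∈ P, ∀ q ∈ Q, G.Adj p q) ∨ (∀ p ∈ P, ∀ q ∈ Q, ¬ G.Adj p q)) ∧
          δ * n ≤ P.card ∧ δ * n ≤ Q.card) ∧
    ¬ ∃ δ : ℝ, 0 < δ ∧
      ∀ (n : ℕ) (G : SimpleGraph (Fin n)),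
        (∀ i, ¬ ∃ f : Vt i → Fin n, Function.Injective f ∧
          ∀ a b : Vt i, (H i).Adj a b ↔ G.Adj (f a) (f b)) →
        2 ≤ n →
        ∃ P Q : Finset (Fin n), P.Nonempty ∧ Q.Nonempty ∧ Disjoint P Q ∧
          ((∀ p ∈ P, ∀ q ∈ Q, G.Adj p q) ∨ (∀ p ∈ P, ∀ q ∈ Q, ¬ G.Adj p q)) ∧
          δ * n ≤ P.card ∧ δ * n ≤ Q.card := by
  constructor
  · -- first part : the trivial graph on 0 vertices works
    intro δ hδ
    refine ⟨0, ⊥, ?_, ?_⟩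
    · rintro i ⟨f, -, -⟩
      obtain ⟨v, -, -⟩ := hcyc i
      exact (f v).elim0
    · rintro ⟨P, Q, ⟨x, -⟩, -⟩
      exact x.elim0
  · -- second part : the probabilistic construction refutes strong EH
    rintro ⟨δ, hδ, hall⟩
    obtain ⟨N, G, hN2, hnowit, hnopair⟩ := EHAux.main_construction k hk δ hδ
    refine hnopair ?_
    have hfree : ∀ i, ¬ ∃ f : Vt i → Fin N, Function.Injective f ∧
        ∀ a b : Vt i, (H i).Adj a b ↔ G.Adj (f a) (f b) := by
      intro i
      obtain ⟨v, w, hw, hwk⟩ := hcyc i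
      exact EHAux.no_witness_free hnowit (H i) v w hw hwk
    exact hall N G hfree hN2
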